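/- arXiv:2409.01244 — 2 statements merged into one kernel-verified Lean document; each statement's English description precedes it below -/
import Mathlib

section
/- Let m ≥ 4 and w > 0 be real, and let L_2 be the m×m matrix whose (1,1)-entry is m-1+w, whose first row and first column off-diagonal entries are all -1, and which equals the identity on the remaining diagonal entries (zero elsewhere off the first row/column). Then the spectrum of L_2 is {β⁻, 1, β⁺}, where β± are the two roots of λ² - (m+w)λ + w = 0; the eigenvalues β⁻ and β⁺ are simple and the eigenvalue 1 has multiplicity m-2. -/
open Real Matrix Polynomial

/-- `L₂ = L_{S_m} + D_C`: (0,0)-entry `m-1+w`, first row/column off-diagonal `-1`,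
identity on the remaining diagonal. -/
def starPlus (m : ℕ) (w : ℝ) : Matrix (Fin m) (Fin m) ℝ :=
  fun i j =>
    if i.val = 0 ∧ j.val = 0 then (m : ℝ) - 1 + w
    else if i.val = 0 ∨ j.val = 0 then -1
    else if i = j then 1 else 0

/-- smaller root of `λ² - (m+w)λ + w`. -/
noncomputable def betaMinus (m : ℕ) (w : ℝ) : ℝ :=
  (((m : ℝ) + w) - Real.sqrt (((m : ℝ) + w) ^ 2 - 4 * w)) / 2

/-- larger root of `λ² - (m+w)λ + w`. -/
noncomputable def betaPlus (m : ℕ) (w : ℝ) : ℝ :=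
  (((m : ℝ) + w) + Real.sqrt (((m : ℝ) + w) ^ 2 - 4 * w)) / 2

lemma myEvalCharpoly {n : Type*} [DecidableEq n] [Fintype n] (A : Matrix n n ℝ) (x : ℝ) :
    A.charpoly.eval x = (Matrix.scalar n x - A).det := by
  rw [Matrix.charpoly, _root_.eval_det, matPolyEquiv_charmatrix, eval_sub, eval_X, eval_C]

lemma evalChar (m : ℕ) (hm : 3 ≤ m) (w x : ℝ) :
    (starPlus m w).charpoly.eval x = (x^2 - ((m:ℝ)+w)*x + w) * (x-1)^(m-2) := by
  obtain ⟨k, rfl⟩ : ∃ k, m = k + 3 := ⟨m - 3, by omega⟩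
  rw [myEvalCharpoly]
  by_cases hx : x = 1
  · subst hx
    have h0 : (Matrix.scalar (Fin (k+3)) 1 - starPlus (k+3) w).det = 0 := by
      apply Matrix.det_zero_of_row_eq (i := (1 : Fin (k+3))) (j := (2 : Fin (k+3)))
      · intro h
        have := congrArg Fin.val h
        have h1 : ((1 : Fin (k+3)) : ℕ) = 1 := by simp [Fin.val_one]
        have h2 : ((2 : Fin (k+3)) : ℕ) = 2 := by simp [Fin.val_two]
        omega
      · have h1 : ((1 : Fin (k+3)) : ℕ) = 1 := by simp [Fin.val_one]
        have h2 : ((2 : Fin (k+3)) : ℕ) = 2 := by simp [Fin.val_two]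
        funext j
        simp only [Matrix.sub_apply, Matrix.scalar_apply, Matrix.diagonal_apply, starPlus,
          Fin.ext_iff, h1, h2]
        split_ifs <;> first | omega | simp_all | norm_num
    rw [h0]
    have hp : ((1:ℝ)-1)^(k+3-2) = 0 := by
      rw [sub_self]; exact zero_pow (by omega)
    rw [hp, mul_zero]
  · have hx' : x - 1 ≠ 0 := sub_ne_zero.2 hx
    set n := k + 2 with hn
    let e : Fin 1 ⊕ Fin n ≃ Fin (k+3) := finSumFinEquiv.trans (finCongr (by omega))
    have he1 : ∀ i : Fin 1, ((e (Sum.inl i)) : ℕ) = 0 := by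
      intro i; simp [e, finSumFinEquiv]
    have he2 : ∀ j : Fin n, ((e (Sum.inr j)) : ℕ) = 1 + j := by
      intro j; simp [e, finSumFinEquiv]; omega
    rw [← Matrix.det_submatrix_equiv_self e]
    have hblocks : (Matrix.scalar (Fin (k+3)) x - starPlus (k+3) w).submatrix e e
        = Matrix.fromBlocks (Matrix.of fun (_ : Fin 1) (_ : Fin 1) => x - (((k:ℝ)+3) - 1 + w))
            (Matrix.of fun (_ : Fin 1) (_ : Fin n) => (1:ℝ))
            (Matrix.of fun (_ : Fin n) (_ : Fin 1) => (1:ℝ))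
            ((x-1) • (1 : Matrix (Fin n) (Fin n) ℝ)) := by
      ext i j
      cases i with
      | inl i =>
        cases j with
        | inl j =>
          simp only [Matrix.submatrix_apply, Matrix.sub_apply, Matrix.scalar_apply,
            Matrix.diagonal_apply, starPlus, Fin.ext_iff, he1, Matrix.fromBlocks_apply₁₁,
            Matrix.of_apply]
          norm_num
        | inr j =>
          simp only [Matrix.submatrix_apply, Matrix.sub_apply, Matrix.scalar_apply,
            Matrix.diagonal_apply, starPlus, Fin.ext_iff, he1, he2, Matrix.fromBlocks_apply₁₂,
            Matrix.of_apply]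
          split_ifs <;> first | omega | simp_all | norm_num
      | inr i =>
        cases j with
        | inl j =>
          simp only [Matrix.submatrix_apply, Matrix.sub_apply, Matrix.scalar_apply,
            Matrix.diagonal_apply, starPlus, Fin.ext_iff, he1, he2, Matrix.fromBlocks_apply₂₁,
            Matrix.of_apply]
          split_ifs <;> first | omega | simp_all | norm_num
        | inr j =>
          simp only [Matrix.submatrix_apply, Matrix.sub_apply, Matrix.scalar_apply,
            Matrix.diagonal_apply, starPlus, Fin.ext_iff, he2, Matrix.fromBlocks_apply₂₂,
            Matrix.smul_apply, Matrix.one_apply, smul_eq_mul]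
          split_ifs <;> first | omega | simp_all | norm_num
    rw [hblocks]
    haveI : Invertible ((x-1) • (1 : Matrix (Fin n) (Fin n) ℝ)) :=
      ⟨(x-1)⁻¹ • (1 : Matrix (Fin n) (Fin n) ℝ),
        by rw [Matrix.smul_mul, Matrix.mul_smul, Matrix.one_mul, smul_smul,
          inv_mul_cancel₀ hx', one_smul],
        by rw [Matrix.smul_mul, Matrix.mul_smul, Matrix.one_mul, smul_smul,
          mul_inv_cancel₀ hx', one_smul]⟩
    rw [Matrix.det_fromBlocks₂₂]
    have hinv : ⅟((x-1) • (1 : Matrix (Fin n) (Fin n) ℝ))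
        = (x-1)⁻¹ • (1 : Matrix (Fin n) (Fin n) ℝ) :=
      invOf_eq_right_inv (by rw [Matrix.smul_mul, Matrix.mul_smul, Matrix.one_mul, smul_smul,
          mul_inv_cancel₀ hx', one_smul])
    rw [hinv]
    have hD : ((x-1) • (1 : Matrix (Fin n) (Fin n) ℝ)).det = (x-1)^n := by
      rw [Matrix.det_smul, Matrix.det_one, mul_one, Fintype.card_fin]
    rw [hD]
    have hSchur : ((Matrix.of fun (_ : Fin 1) (_ : Fin 1) => x - (((k:ℝ)+3) - 1 + w)) -
        (Matrix.of fun (_ : Fin 1) (_ : Fin n) => (1:ℝ)) * ((x-1)⁻¹ • (1 : Matrix (Fin n) (Fin n) ℝ)) *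
        (Matrix.of fun (_ : Fin n) (_ : Fin 1) => (1:ℝ))).det
        = (x - (((k:ℝ)+3) - 1 + w)) - (n:ℝ) * (x-1)⁻¹ := by
      rw [Matrix.det_fin_one]
      simp only [Matrix.sub_apply, Matrix.of_apply, Matrix.mul_apply, Matrix.smul_apply,
        Matrix.one_apply, smul_eq_mul, mul_ite, mul_one, mul_zero,
        Finset.mem_univ, if_true]
      simp [Finset.sum_ite_eq', Finset.sum_const, Finset.card_univ]
    rw [hSchur]
    have hcast : ((k:ℝ)+3) = ((k+3 : ℕ) : ℝ) := by push_cast; ring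
    have hpowsplit : (x-1)^n = (x-1)^(k+1) * (x-1) := by
      rw [hn]; ring
    have hE : k + 3 - 2 = k + 1 := by omega
    rw [hE, hpowsplit]
    push_cast [hn]
    field_simp
    ring

lemma myRMpow (a b : ℝ) (k : ℕ) :
    rootMultiplicity a ((X - C b) ^ k) = k * rootMultiplicity a (X - C b) := by
  induction k with
  | zero => simp
  | succ k ih =>
    rw [pow_succ, rootMultiplicity_mul
      (mul_ne_zero (pow_ne_zero _ (X_sub_C_ne_zero b)) (X_sub_C_ne_zero b)), ih]
    ring

theorem stmt1 (m : ℕ) (hm : 4 ≤ m) (w : ℝ) (hw : 0 < w) :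
    spectrum ℝ (starPlus m w) = {betaMinus m w, 1, betaPlus m w} ∧
    (starPlus m w).charpoly.rootMultiplicity (betaMinus m w) = 1 ∧
    (starPlus m w).charpoly.rootMultiplicity (betaPlus m w) = 1 ∧
    (starPlus m w).charpoly.rootMultiplicity 1 = m - 2 := by
  have hm4 : (4:ℝ) ≤ (m:ℝ) := by exact_mod_cast hm
  have hdisc : 0 < ((m:ℝ)+w)^2 - 4*w := by nlinarith
  have hs2 : Real.sqrt (((m:ℝ)+w)^2 - 4*w) ^ 2 = ((m:ℝ)+w)^2 - 4*w :=
    Real.sq_sqrt hdisc.le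
  have hspos : 0 < Real.sqrt (((m:ℝ)+w)^2 - 4*w) := Real.sqrt_pos.2 hdisc
  set βm := betaMinus m w with hbm
  set βp := betaPlus m w with hbp
  have hsum : βm + βp = (m:ℝ) + w := by
    rw [hbm, hbp]; unfold betaMinus betaPlus; ring
  have hprod : βm * βp = w := by
    rw [hbm, hbp]; unfold betaMinus betaPlus
    field_simp
    have hs2' : Real.sqrt (((m:ℝ)+w)^2 - w*4) ^ 2 = ((m:ℝ)+w)^2 - w*4 := by
      rw [mul_comm w 4]; exact hs2
    nlinarith [hs2']
  have hdiff : βp - βm = Real.sqrt (((m:ℝ)+w)^2 - 4*w) := by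
    rw [hbm, hbp]; unfold betaMinus betaPlus; ring
  have hne : βm ≠ βp := by
    intro h
    rw [h, sub_self] at hdiff
    linarith
  have hkey : (1 - βm) * (1 - βp) = 1 - (m:ℝ) := by
    linear_combination (-1 : ℝ) * hsum + hprod
  have h1m : (1:ℝ) - (m:ℝ) ≠ 0 := by linarith
  have hbm1 : βm ≠ 1 := by
    intro h
    exact h1m (by rw [← hkey, h]; ring)
  have hbp1 : βp ≠ 1 := by
    intro h
    exact h1m (by rw [← hkey, h]; ring)
  have hfac : ∀ x : ℝ, x^2 - ((m:ℝ)+w)*x + w = (x - βm)*(x - βp) := by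
    intro x
    linear_combination x * hsum - hprod
  have hm3 : 3 ≤ m := by omega
  have hp : (starPlus m w).charpoly
      = (X - C βm) * (X - C βp) * (X - C 1)^(m-2) := by
    apply Polynomial.funext
    intro x
    rw [evalChar m hm3 w x]
    simp only [eval_mul, eval_pow, eval_sub, eval_X, eval_C]
    rw [hfac x]
  have hprodne : (X - C βm) * (X - C βp) * (X - C 1)^(m-2) ≠ 0 :=
    mul_ne_zero (mul_ne_zero (X_sub_C_ne_zero βm) (X_sub_C_ne_zero βp))
      (pow_ne_zero _ (X_sub_C_ne_zero 1))
  refine ⟨?_, ?_, ?_, ?_⟩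
  · ext x
    have halg : (algebraMap ℝ (Matrix (Fin m) (Fin m) ℝ)) x = Matrix.scalar (Fin m) x := by
      ext i j
      simp [Matrix.algebraMap_matrix_apply, Matrix.scalar_apply, Matrix.diagonal_apply]
    have hx : x ∈ spectrum ℝ (starPlus m w) ↔ (starPlus m w).charpoly.eval x = 0 := by
      rw [spectrum.mem_iff, myEvalCharpoly, halg]
      simp [Matrix.isUnit_iff_isUnit_det, isUnit_iff_ne_zero]
    rw [Set.mem_insert_iff, Set.mem_insert_iff, Set.mem_singleton_iff, hx, hp]
    simp only [eval_mul, eval_pow, eval_sub, eval_X, eval_C, mul_eq_zero,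
      pow_eq_zero_iff (by omega : m - 2 ≠ 0), sub_eq_zero]
    constructor
    · rintro ((h | h) | h)
      · exact Or.inl h
      · exact Or.inr (Or.inr h)
      · exact Or.inr (Or.inl h)
    · rintro (h | h | h)
      · exact Or.inl (Or.inl h)
      · exact Or.inr h
      · exact Or.inl (Or.inr h)
  · rw [hp, rootMultiplicity_mul hprodne,
      rootMultiplicity_mul (mul_ne_zero (X_sub_C_ne_zero βm) (X_sub_C_ne_zero βp)),
      myRMpow, rootMultiplicity_X_sub_C, rootMultiplicity_X_sub_C, rootMultiplicity_X_sub_C]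
    rw [if_pos rfl, if_neg hne, if_neg hbm1]
    ring
  · rw [hp, rootMultiplicity_mul hprodne,
      rootMultiplicity_mul (mul_ne_zero (X_sub_C_ne_zero βm) (X_sub_C_ne_zero βp)),
      myRMpow, rootMultiplicity_X_sub_C, rootMultiplicity_X_sub_C, rootMultiplicity_X_sub_C]
    rw [if_neg (Ne.symm hne), if_pos rfl, if_neg hbp1]
    ring
  · rw [hp, rootMultiplicity_mul hprodne,
      rootMultiplicity_mul (mul_ne_zero (X_sub_C_ne_zero βm) (X_sub_C_ne_zero βp)),
      myRMpow, rootMultiplicity_X_sub_C, rootMultiplicity_X_sub_C, rootMultiplicity_X_sub_C]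
    rw [if_neg (Ne.symm hbm1), if_neg (Ne.symm hbp1), if_pos rfl]
    ring
end

section
/- With M(λ) as above, if there exists 1 ≤ i ≤ m-1 with X_i(1) ≠ 1, then the kernel of M(1) (the space of v with M(1)v = 0) and the left kernel (the space of v with vᵀM(1) = 0) each have dimension m-2; moreover every vector in either kernel has first coordinate v_0 = 0. -/
open Matrix

/-- The matrix `M(λ)` of Lemma B.2. -/
def MmatX (m : ℕ) (X : ℕ → ℝ → ℝ) (lam : ℝ) : Matrix (Fin m) (Fin m) ℝ :=
  fun i j =>
    if i.val = 0 ∧ j.val = 0 then (m : ℝ) - lam + X 0 lam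
    else if i.val = 0 then -1 + X j.val lam
    else if j.val = 0 then 1
    else if i = j then 1 - lam else 0

theorem stmt11 (m : ℕ) (hm : 4 ≤ m) (X : ℕ → ℝ → ℝ)
    (hX : ∃ i : ℕ, 1 ≤ i ∧ i ≤ m - 1 ∧ X i 1 ≠ 1) :
    Module.finrank ℝ (LinearMap.ker (MmatX m X 1).mulVecLin) = m - 2 ∧
    Module.finrank ℝ (LinearMap.ker ((MmatX m X 1)ᵀ).mulVecLin) = m - 2 ∧
    (∀ v ∈ LinearMap.ker (MmatX m X 1).mulVecLin, v ⟨0, by omega⟩ = 0) ∧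
    (∀ v ∈ LinearMap.ker ((MmatX m X 1)ᵀ).mulVecLin, v ⟨0, by omega⟩ = 0) := by
  obtain ⟨i, hi1, hi2, hXi⟩ := hX
  have him : i < m := by omega
  set i0 : Fin m := ⟨0, by omega⟩ with hi0def
  set iF : Fin m := ⟨i, him⟩ with hiFdef
  set i1 : Fin m := ⟨1, by omega⟩ with hi1def
  have hiF0 : iF ≠ i0 := by
    intro h
    have := congrArg Fin.val h
    simp only [hiFdef, hi0def] at this
    omega
  set A := MmatX m X 1 with hAdef
  have hc : (-1 : ℝ) + X i 1 ≠ 0 := by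
    intro h
    apply hXi
    linarith
  -- rows i ≥ 1 of A :
  have hrow : ∀ (v : Fin m → ℝ) (k : Fin m), k.val ≠ 0 → A.mulVec v k = v i0 := by
    intro v k hk
    simp only [Matrix.mulVec, dotProduct]
    rw [Finset.sum_eq_single i0]
    · simp [hAdef, MmatX, hk, hi0def]
    · intro j _ hj
      have hj0 : j.val ≠ 0 := by
        intro h; exact hj (Fin.ext (by simpa [hi0def] using h))
      by_cases hkj : k = j <;> simp [hAdef, MmatX, hk, hj0, hkj]
    · simp
  -- rows i ≥ 1 of Aᵀ :
  have hrowT : ∀ (v : Fin m → ℝ) (k : Fin m), k.val ≠ 0 →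
      Aᵀ.mulVec v k = (-1 + X k.val 1) * v i0 := by
    intro v k hk
    simp only [Matrix.mulVec, dotProduct, Matrix.transpose_apply]
    rw [Finset.sum_eq_single i0]
    · simp [hAdef, MmatX, hk, hi0def]
    · intro j _ hj
      have hj0 : j.val ≠ 0 := by
        intro h; exact hj (Fin.ext (by simpa [hi0def] using h))
      by_cases hkj : j = k <;> simp [hAdef, MmatX, hk, hj0, hkj]
    · simp
  -- first coordinate vanishes on kernels
  have hker0 : ∀ v ∈ LinearMap.ker A.mulVecLin, v i0 = 0 := by
    intro v hv
    rw [LinearMap.mem_ker] at hv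
    have h1 : A.mulVec v i1 = 0 := by
      rw [← Matrix.mulVecLin_apply, hv]; rfl
    rw [hrow v i1 (by simp [hi1def])] at h1
    exact h1
  have hkerT0 : ∀ v ∈ LinearMap.ker Aᵀ.mulVecLin, v i0 = 0 := by
    intro v hv
    rw [LinearMap.mem_ker] at hv
    have h1 : Aᵀ.mulVec v iF = 0 := by
      rw [← Matrix.mulVecLin_apply, hv]; rfl
    rw [hrowT v iF (by simp [hiFdef]; omega)] at h1
    exact (mul_eq_zero.mp h1).resolve_left hc
  -- the auxiliary maps to ℝ × ℝ
  set g : (Fin m → ℝ) →ₗ[ℝ] ℝ × ℝ :=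
    LinearMap.prod (LinearMap.proj i0) ((LinearMap.proj i0).comp A.mulVecLin) with hgdef
  set gT : (Fin m → ℝ) →ₗ[ℝ] ℝ × ℝ :=
    LinearMap.prod (LinearMap.proj i0) ((LinearMap.proj i0).comp Aᵀ.mulVecLin) with hgTdef
  have hgapp : ∀ v, g v = (v i0, A.mulVec v i0) := fun v => rfl
  have hgTapp : ∀ v, gT v = (v i0, Aᵀ.mulVec v i0) := fun v => rfl
  -- kernels agree
  have hkg : LinearMap.ker g = LinearMap.ker A.mulVecLin := by
    ext v
    simp only [LinearMap.mem_ker, hgapp, Prod.mk_eq_zero, Matrix.mulVecLin_apply]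
    constructor
    · rintro ⟨h0, h1⟩
      funext k
      by_cases hk : k.val = 0
      · have : k = i0 := Fin.ext (by simpa [hi0def] using hk)
        rw [this]; simpa using h1
      · rw [hrow v k hk]; simpa using h0
    · intro h
      refine ⟨?_, by rw [h]; rfl⟩
      have h1 : A.mulVec v i1 = 0 := by rw [h]; rfl
      rwa [hrow v i1 (by simp [hi1def])] at h1
  have hkgT : LinearMap.ker gT = LinearMap.ker Aᵀ.mulVecLin := by
    ext v
    simp only [LinearMap.mem_ker, hgTapp, Prod.mk_eq_zero, Matrix.mulVecLin_apply]
    constructor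
    · rintro ⟨h0, h1⟩
      funext k
      by_cases hk : k.val = 0
      · have : k = i0 := Fin.ext (by simpa [hi0def] using hk)
        rw [this]; simpa using h1
      · rw [hrowT v k hk, h0, mul_zero]; rfl
    · intro h
      refine ⟨?_, by rw [h]; rfl⟩
      have h1 : Aᵀ.mulVec v iF = 0 := by rw [h]; rfl
      rw [hrowT v iF (by simp [hiFdef]; omega)] at h1
      exact (mul_eq_zero.mp h1).resolve_left hc
  -- surjectivity of g
  have hgsurj : Function.Surjective g := by
    rintro ⟨a, b⟩
    set d : ℝ := A i0 i0 with hd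
    set t : ℝ := (b - a * d) / (-1 + X i 1) with ht
    refine ⟨a • (Pi.single i0 1 : Fin m → ℝ) + t • (Pi.single iF 1 : Fin m → ℝ), ?_⟩
    rw [hgapp]
    have hv0 : (a • (Pi.single i0 1 : Fin m → ℝ) + t • (Pi.single iF 1 : Fin m → ℝ)) i0 = a := by
      have h0 : (Pi.single iF 1 : Fin m → ℝ) i0 = 0 := Pi.single_eq_of_ne (Ne.symm hiF0) 1
      simp [h0]
    have hAiF : A i0 iF = -1 + X i 1 := by
      simp [hAdef, MmatX, hi0def, hiFdef]
      omega
    have hmv : A.mulVec (a • (Pi.single i0 1 : Fin m → ℝ) + t • (Pi.single iF 1 : Fin m → ℝ)) i0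
        = a * d + t * (-1 + X i 1) := by
      rw [Matrix.mulVec_add, Matrix.mulVec_smul, Matrix.mulVec_smul]
      simp only [Pi.add_apply, Pi.smul_apply, smul_eq_mul]
      rw [Matrix.mulVec_single, Matrix.mulVec_single]
      simp [hd, hAiF]
    rw [hv0, hmv, ht]
    rw [div_mul_cancel₀ _ hc]
    simp
  -- surjectivity of gT
  have hgTsurj : Function.Surjective gT := by
    rintro ⟨a, b⟩
    set d : ℝ := A i0 i0 with hd
    refine ⟨a • (Pi.single i0 1 : Fin m → ℝ) + (b - a * d) • (Pi.single i1 1 : Fin m → ℝ), ?_⟩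
    rw [hgTapp]
    have hi10 : i1 ≠ i0 := by simp [hi1def, hi0def, Fin.ext_iff]
    have hv0 : (a • (Pi.single i0 1 : Fin m → ℝ) + (b - a * d) • (Pi.single i1 1 : Fin m → ℝ)) i0 = a := by
      have h0 : (Pi.single i1 1 : Fin m → ℝ) i0 = 0 := Pi.single_eq_of_ne (Ne.symm hi10) 1
      simp [h0]
    have hA10 : A i1 i0 = 1 := by simp [hAdef, MmatX, hi0def, hi1def]
    have hA00 : Aᵀ i0 i0 = d := rfl
    have hmv : Aᵀ.mulVec (a • (Pi.single i0 1 : Fin m → ℝ) + (b - a * d) • (Pi.single i1 1 : Fin m → ℝ)) i0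
        = a * d + (b - a * d) * 1 := by
      rw [Matrix.mulVec_add, Matrix.mulVec_smul, Matrix.mulVec_smul]
      simp only [Pi.add_apply, Pi.smul_apply, smul_eq_mul]
      rw [Matrix.mulVec_single, Matrix.mulVec_single]
      simp only [Pi.smul_apply, Matrix.col_apply, op_smul_eq_mul, Matrix.transpose_apply, hA10]
      rw [show A i0 i0 = d from rfl]
      ring
    rw [hv0, hmv]
    simp
  -- rank-nullity
  have hfr : ∀ (f : (Fin m → ℝ) →ₗ[ℝ] ℝ × ℝ), Function.Surjective f →
      Module.finrank ℝ (LinearMap.ker f) = m - 2 := by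
    intro f hf
    have h1 := LinearMap.finrank_range_add_finrank_ker f
    rw [LinearMap.range_eq_top.mpr hf] at h1
    rw [finrank_top] at h1
    have h2 : Module.finrank ℝ (ℝ × ℝ) = 2 := by simp
    have h3 : Module.finrank ℝ (Fin m → ℝ) = m := by simp
    rw [h2, h3] at h1
    omega
  refine ⟨?_, ?_, hker0, hkerT0⟩
  · rw [← hkg]; exact hfr g hgsurj
  · rw [← hkgT]; exact hfr gT hgTsurj
end
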